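/- Let 1 = c₁² > c₂² > ... > cₙ² ≥ 0 be replaced by general values c₁ > c₂ ≥ cₙ in [0,1] with c₁² > c₂² > cₙ², and for γ > 0 define ω_i⁻² = c_i² + γ²(1 − c_i²) and c_i' = ω_i c_i. Then the ratio of relative gaps ρ'₁/ρ₁ := ((c'₁² − c'₂²)(c₂² − cₙ²)) / ((c'₂² − c'ₙ²)(c₁² − c₂²)) equals (cₙ² + γ²(1 − cₙ²)) / (c₁² + γ²(1 − c₁²)) = ω₁²/ωₙ². -/

import Mathlib

/-- The ratio of relative gaps after scaling equals
(cₙ² + γ²(1−cₙ²))/(c₁² + γ²(1−c₁²)) = ω₁²/ωₙ². -/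
theorem scaled_relative_gap_ratio (c1 c2 cn γ : ℝ)
    (h1 : c1 ∈ Set.Icc (0 : ℝ) 1) (h2 : c2 ∈ Set.Icc (0 : ℝ) 1)
    (hn : cn ∈ Set.Icc (0 : ℝ) 1)
    (h12 : c2 ^ 2 < c1 ^ 2) (h2n : cn ^ 2 < c2 ^ 2) (hγ : 0 < γ) :
    let ω : ℝ → ℝ := fun c => (Real.sqrt (c ^ 2 + γ ^ 2 * (1 - c ^ 2)))⁻¹
    let c' : ℝ → ℝ := fun c => ω c * c
    ((c' c1 ^ 2 - c' c2 ^ 2) * (c2 ^ 2 - cn ^ 2)) /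
        ((c' c2 ^ 2 - c' cn ^ 2) * (c1 ^ 2 - c2 ^ 2)) =
      (cn ^ 2 + γ ^ 2 * (1 - cn ^ 2)) / (c1 ^ 2 + γ ^ 2 * (1 - c1 ^ 2)) ∧
    (cn ^ 2 + γ ^ 2 * (1 - cn ^ 2)) / (c1 ^ 2 + γ ^ 2 * (1 - c1 ^ 2)) =
      ω c1 ^ 2 / ω cn ^ 2 := by
  intro ω c'
  have hfpos : ∀ c : ℝ, c ∈ Set.Icc (0 : ℝ) 1 → 0 < c ^ 2 + γ ^ 2 * (1 - c ^ 2) := by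
    intro c hc
    rcases eq_or_ne c 0 with rfl | hc0
    · simpa using by positivity
    · have h1c : 0 ≤ 1 - c ^ 2 := by nlinarith [hc.1, hc.2]
      have : 0 < c ^ 2 := by positivity
      nlinarith [sq_nonneg γ]
  have hω2 : ∀ c : ℝ, c ∈ Set.Icc (0 : ℝ) 1 →
      ω c ^ 2 = (c ^ 2 + γ ^ 2 * (1 - c ^ 2))⁻¹ := by
    intro c hc
    have h := hfpos c hc
    simp only [ω, inv_pow]
    rw [Real.sq_sqrt h.le]
  have hc2 : ∀ c : ℝ, c ∈ Set.Icc (0 : ℝ) 1 →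
      c' c ^ 2 = c ^ 2 / (c ^ 2 + γ ^ 2 * (1 - c ^ 2)) := by
    intro c hc
    simp only [c', mul_pow, hω2 c hc, inv_mul_eq_div]
  have f1 := hfpos c1 h1
  have f2 := hfpos c2 h2
  have fn := hfpos cn hn
  constructor
  · rw [hc2 c1 h1, hc2 c2 h2, hc2 cn hn]
    have hd12 : c1 ^ 2 / (c1 ^ 2 + γ ^ 2 * (1 - c1 ^ 2)) -
        c2 ^ 2 / (c2 ^ 2 + γ ^ 2 * (1 - c2 ^ 2)) =
        γ ^ 2 * (c1 ^ 2 - c2 ^ 2) /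
          ((c1 ^ 2 + γ ^ 2 * (1 - c1 ^ 2)) * (c2 ^ 2 + γ ^ 2 * (1 - c2 ^ 2))) := by
      field_simp
      ring
    have hd2n : c2 ^ 2 / (c2 ^ 2 + γ ^ 2 * (1 - c2 ^ 2)) -
        cn ^ 2 / (cn ^ 2 + γ ^ 2 * (1 - cn ^ 2)) =
        γ ^ 2 * (c2 ^ 2 - cn ^ 2) /
          ((c2 ^ 2 + γ ^ 2 * (1 - c2 ^ 2)) * (cn ^ 2 + γ ^ 2 * (1 - cn ^ 2))) := by
      field_simp
      ring
    rw [hd12, hd2n]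
    have hγ2 : γ ^ 2 ≠ 0 := by positivity
    have h12' : c1 ^ 2 - c2 ^ 2 ≠ 0 := by linarith
    have h2n' : c2 ^ 2 - cn ^ 2 ≠ 0 := by linarith
    field_simp
  · rw [hω2 c1 h1, hω2 cn hn]
    rw [div_eq_div_iff f1.ne' (by positivity)]
    field_simp
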